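/- arXiv:1805.07236 — 2 statements merged into one kernel-verified Lean document; each statement's English description precedes it below -/
import Mathlib

section
/- Let X be a compact metric space and C(X) the unital separable abelian C*-algebra of continuous functions on X. Let (N,τ) be a type II₁ factor with separable predual and p a projection in N. Suppose π : C(X) → N is a unital *-homomorphism and ρ : C(X) → pNp is a unital *-homomorphism (so ρ(1) = p) such that τ(R(ρ(f))) ≤ τ(R(π(f))) for every f ∈ C(X), where R(x) denotes the range projection of x. Then τ(ρ(h)) ≤ τ(π(h)) for every positive function h ∈ C(X). -/
open scoped ComplexOrder ENNReal NNReal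

noncomputable section

namespace ShenShi

variable {E F : Type*}
  [NormedAddCommGroup E] [InnerProductSpace ℂ E] [CompleteSpace E]
  [NormedAddCommGroup F] [InnerProductSpace ℂ F] [CompleteSpace F]

/-- The Loewner (pre)order on bounded operators: `a ≤ b` iff `b - a` is positive. -/
def opLE (a b : E →L[ℂ] E) : Prop := (b - a).IsPositive

/-- `x` lies in the weak-operator-topology closure of the set `S` of operators. -/
def InWOTClosure (S : Set (E →L[ℂ] E)) (x : E →L[ℂ] E) : Prop :=
  ∀ (k : ℕ) (ξ η : Fin k → E) (ε : ℝ), 0 < ε →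
    ∃ s ∈ S, ∀ i, ‖(inner ℂ ((x - s) (ξ i)) (η i) : ℂ)‖ < ε

/-- `x` is a least upper bound of `s` for the Loewner order. -/
def OpIsLUB (s : Set (E →L[ℂ] E)) (x : E →L[ℂ] E) : Prop :=
  (∀ y ∈ s, opLE y x) ∧ ∀ z, (∀ y ∈ s, opLE y z) → opLE x z

/-- `p` is a projection belonging to the von Neumann algebra `M`. -/
def MemProj (M : VonNeumannAlgebra E) (p : E →L[ℂ] E) : Prop :=
  p ∈ M ∧ p * p = p ∧ star p = p

/-- `r` is the range projection of `x` in `M`: the smallest projection `q ∈ M`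
with `q * x = x` (the order on projections being `r ≤ q ↔ q * r = r`). -/
def IsRangeProjection (M : VonNeumannAlgebra E) (x r : E →L[ℂ] E) : Prop :=
  MemProj M r ∧ r * x = x ∧ ∀ q, MemProj M q → q * x = x → q * r = r

def IsUnitaryIn (M : VonNeumannAlgebra E) (u : E →L[ℂ] E) : Prop :=
  u ∈ M ∧ star u * u = 1 ∧ u * star u = 1

/-- A factor: a von Neumann algebra with trivial center. -/
def IsFactor (M : VonNeumannAlgebra E) : Prop :=
  ∀ x ∈ M, (∀ y ∈ M, x * y = y * x) → ∃ c : ℂ, x = c • (1 : E →L[ℂ] E)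

def IsInfiniteDimensionalVN (M : VonNeumannAlgebra E) : Prop :=
  ¬ ∃ s : Finset (E →L[ℂ] E), (↑s : Set (E →L[ℂ] E)) ⊆ (M : Set (E →L[ℂ] E)) ∧
      ∀ x ∈ M, x ∈ Submodule.span ℂ (↑s : Set (E →L[ℂ] E))

/-- `π` restricted to `S` is a `*`-homomorphism. -/
def IsStarHomOn {A B : Type*} [NonUnitalNonAssocSemiring A] [Module ℂ A] [Star A]
    [NonUnitalNonAssocSemiring B] [Module ℂ B] [Star B]
    (S : Set A) (π : A → B) : Prop :=
  (∀ x ∈ S, ∀ y ∈ S, π (x + y) = π x + π y) ∧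
  (∀ x ∈ S, ∀ y ∈ S, π (x * y) = π x * π y) ∧
  (∀ (c : ℂ), ∀ x ∈ S, π (c • x) = c • π x) ∧
  (∀ x ∈ S, π (star x) = star (π x))

/-- A faithful normal tracial state on the von Neumann algebra `M`. -/
def IsFNTracialState (M : VonNeumannAlgebra E) (τ : (E →L[ℂ] E) → ℂ) : Prop :=
  (∀ x ∈ M, ∀ y ∈ M, τ (x + y) = τ x + τ y) ∧
  (∀ (c : ℂ), ∀ x ∈ M, τ (c • x) = c * τ x) ∧
  τ 1 = 1 ∧
  (∀ x ∈ M, ∀ y ∈ M, τ (x * y) = τ (y * x)) ∧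
  (∀ x ∈ M, x.IsPositive → 0 ≤ τ x) ∧
  (∀ x ∈ M, τ (star x * x) = 0 → x = 0) ∧
  (∀ (ι : Type) (ipre : Preorder ι) (f : ι → E →L[ℂ] E) (x : E →L[ℂ] E),
     Nonempty ι → (∀ i, f i ∈ M ∧ (f i).IsPositive) →
     (∀ i j, ipre.le i j → opLE (f i) (f j)) →
     x ∈ M → OpIsLUB (Set.range f) x →
     IsLUB (Set.range fun i => (τ (f i)).re) ((τ x).re))

/-- A type II₁ factor together with its faithful normal tracial state:
an infinite-dimensional factor with a faithful normal tracial state. -/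
def IsTypeII1Factor (M : VonNeumannAlgebra E) (τ : (E →L[ℂ] E) → ℂ) : Prop :=
  IsFactor M ∧ IsInfiniteDimensionalVN M ∧ IsFNTracialState M τ

/-- A faithful normal semifinite tracial weight on the von Neumann algebra `M`. -/
def IsFNSTracialWeight (M : VonNeumannAlgebra E) (τ : (E →L[ℂ] E) → ℝ≥0∞) : Prop :=
  (∀ x y, x ∈ M → ContinuousLinearMap.IsPositive x → y ∈ M →
     ContinuousLinearMap.IsPositive y → τ (x + y) = τ x + τ y) ∧
  (∀ (c : ℝ≥0) (x : E →L[ℂ] E), x ∈ M → x.IsPositive →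
     τ (((c : ℝ) : ℂ) • x) = (c : ℝ≥0∞) * τ x) ∧
  (∀ x ∈ M, τ (star x * x) = τ (x * star x)) ∧
  (∀ x, x ∈ M → ContinuousLinearMap.IsPositive x → τ x = 0 → x = 0) ∧
  (∀ (ι : Type) (ipre : Preorder ι) (f : ι → E →L[ℂ] E) (x : E →L[ℂ] E),
     Nonempty ι → (∀ i, f i ∈ M ∧ (f i).IsPositive) →
     (∀ i j, ipre.le i j → opLE (f i) (f j)) →
     x ∈ M → OpIsLUB (Set.range f) x → τ x = ⨆ i, τ (f i)) ∧
  (∀ x, x ∈ M → ContinuousLinearMap.IsPositive x → x ≠ 0 →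
     ∃ y, y ∈ M ∧ ContinuousLinearMap.IsPositive y ∧ y ≠ 0 ∧ opLE y x ∧ τ y < ⊤)

/-- `a` is an `(M,τ)`-finite-rank operator: `a = x * p * y` with `x y ∈ M` and
`p ∈ M` a projection of finite trace. -/
def IsFiniteRank (M : VonNeumannAlgebra E) (τ : (E →L[ℂ] E) → ℝ≥0∞)
    (a : E →L[ℂ] E) : Prop :=
  ∃ x p y, x ∈ M ∧ y ∈ M ∧ MemProj M p ∧ τ p < ⊤ ∧ a = x * p * y

/-- `a` is compact in `(M,τ)`: it lies in the operator-norm closure of the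
`(M,τ)`-finite-rank operators. -/
def IsCompactIn (M : VonNeumannAlgebra E) (τ : (E →L[ℂ] E) → ℝ≥0∞)
    (a : E →L[ℂ] E) : Prop :=
  a ∈ closure {b | IsFiniteRank M τ b}

def IsStarSubalgebraSet {A : Type*} [NonUnitalNonAssocSemiring A] [Module ℂ A] [Star A]
    (S : Set A) : Prop :=
  (0 : A) ∈ S ∧ (∀ x ∈ S, ∀ y ∈ S, x + y ∈ S) ∧ (∀ x ∈ S, ∀ y ∈ S, x * y ∈ S) ∧
  (∀ (c : ℂ), ∀ x ∈ S, c • x ∈ S) ∧ (∀ x ∈ S, star x ∈ S)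

/-- `S` is a C*-subalgebra (norm-closed `*`-subalgebra) of the von Neumann algebra `M`. -/
def IsCStarSubalgebraOf (M : VonNeumannAlgebra E) (S : Set (E →L[ℂ] E)) : Prop :=
  IsStarSubalgebraSet S ∧ IsClosed S ∧ S ⊆ (M : Set (E →L[ℂ] E))

/-- The C*-algebra `A` (with unit `IA`) is `n`-homogeneous: every irreducible
representation of `A` is of dimension `n`. -/
def IsNHomogeneous (A : Set (E →L[ℂ] E)) (IA : E →L[ℂ] E) (n : ℕ) : Prop :=
  ∀ (K : Type) [NormedAddCommGroup K] [InnerProductSpace ℂ K] [CompleteSpace K],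
    ∀ σ : (E →L[ℂ] E) → (K →L[ℂ] K),
      Nontrivial K → IsStarHomOn A σ → σ IA = 1 →
      (∀ T : K →L[ℂ] K, (∀ a ∈ A, T * σ a = σ a * T) → ∃ c : ℂ, T = c • (1 : K →L[ℂ] K)) →
      FiniteDimensional ℂ K ∧ Module.finrank ℂ K = n

/-- The C*-algebra `A` (with unit `IA`) is locally homogeneous: a finite direct sum
of homogeneous C*-algebras. -/
def IsLocallyHomogeneous (A : Set (E →L[ℂ] E)) (IA : E →L[ℂ] E) : Prop :=
  ∃ (m : ℕ) (n : Fin m → ℕ) (e : Fin m → E →L[ℂ] E),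
    (∀ i, e i ∈ A ∧ e i * e i = e i ∧ star (e i) = e i ∧ ∀ a ∈ A, a * e i = e i * a) ∧
    (∀ i j, i ≠ j → e i * e j = 0) ∧
    (∑ i, e i) = IA ∧
    (∀ i, IsNHomogeneous {x | ∃ a ∈ A, x = a * e i} (e i) (n i))

/-- `A` is an AH subalgebra of `M` with identity `IA`: it contains an increasing
sequence of locally homogeneous C*-subalgebras whose union is norm-dense in `A`. -/
def IsAHSubalgebra (M : VonNeumannAlgebra E) (A : Set (E →L[ℂ] E)) (IA : E →L[ℂ] E) : Prop :=
  IsCStarSubalgebraOf M A ∧ IA ∈ A ∧ (∀ a ∈ A, a * IA = a ∧ IA * a = a) ∧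
  ∃ B : ℕ → Set (E →L[ℂ] E),
    (∀ k, B k ⊆ A) ∧ (∀ k, B k ⊆ B (k + 1)) ∧
    (∀ k, IsStarSubalgebraSet (B k) ∧ IsClosed (B k) ∧ IA ∈ B k ∧
      IsLocallyHomogeneous (B k) IA) ∧
    (∀ a ∈ A, a ∈ closure (⋃ k, B k))

def IsCountablyDecomposable (M : VonNeumannAlgebra E) : Prop :=
  ∀ S : Set (E →L[ℂ] E), (∀ p ∈ S, MemProj M p ∧ p ≠ 0) →
    (∀ p ∈ S, ∀ q ∈ S, p ≠ q → p * q = 0) → S.Countable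

def IsProperlyInfinite (M : VonNeumannAlgebra E) : Prop :=
  ∃ v, v ∈ M ∧ star v * v = 1 ∧ v * star v ≠ 1

/-- `p` is the supremum in `M` of the range projections of the members of `S`. -/
def IsProjSupOver (M : VonNeumannAlgebra E) (S : Set (E →L[ℂ] E)) (p : E →L[ℂ] E) : Prop :=
  MemProj M p ∧ (∀ x ∈ S, ∀ r, IsRangeProjection M x r → p * r = r) ∧
  (∀ q, MemProj M q → (∀ x ∈ S, ∀ r, IsRangeProjection M x r → q * r = r) → q * p = p)

/-- Normality of a map on `S`: it carries least upper bounds of bounded increasing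
nets of positive operators in `S` to least upper bounds. -/
def IsNormalOn (S : Set (E →L[ℂ] E)) (π : (E →L[ℂ] E) → (F →L[ℂ] F)) : Prop :=
  ∀ (ι : Type) (ipre : Preorder ι) (f : ι → E →L[ℂ] E) (x : E →L[ℂ] E),
    Nonempty ι → (∀ i, f i ∈ S ∧ (f i).IsPositive) →
    (∀ i j, ipre.le i j → opLE (f i) (f j)) →
    x ∈ S → OpIsLUB (Set.range f) x →
    OpIsLUB (Set.range fun i => π (f i)) (π x)

/-- Weak*-to-WOT continuity of `π` on `S`, expressed via bounded nets converging
in the weak operator topology. -/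
def IsWOTWOTContinuousOn (S : Set (E →L[ℂ] E)) (π : (E →L[ℂ] E) → (F →L[ℂ] F)) : Prop :=
  ∀ (ι : Type) (l : Filter ι) (f : ι → E →L[ℂ] E) (x : E →L[ℂ] E),
    (∀ i, f i ∈ S) → x ∈ S → (∃ C : ℝ, ∀ i, ‖f i‖ ≤ C) →
    (∀ ξ η : E, Filter.Tendsto (fun i => (inner ℂ (f i ξ) η : ℂ)) l (nhds (inner ℂ (x ξ) η))) →
    (∀ ξ η : F, Filter.Tendsto (fun i => (inner ℂ (π (f i) ξ) η : ℂ)) l (nhds (inner ℂ (π x ξ) η)))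

/-- `R` is a type Iₙ von Neumann algebra (with unit `u`): it possesses a system of
`n × n` matrix units whose relative commutant in `R` is abelian and which, together
with that relative commutant, generates `R`. -/
def IsTypeInSet (R : Set (E →L[ℂ] E)) (u : E →L[ℂ] E) (n : ℕ) : Prop :=
  ∃ e : Fin n → Fin n → E →L[ℂ] E,
    (∀ i j, e i j ∈ R) ∧
    (∀ i j, star (e i j) = e j i) ∧
    (∀ i j k l, e i j * e k l = if j = k then e i l else 0) ∧
    (∑ i, e i i) = u ∧
    (∀ x, x ∈ R → (∀ i j, x * e i j = e i j * x) →
      ∀ y, y ∈ R → (∀ i j, y * e i j = e i j * y) → x * y = y * x) ∧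
    (∀ r ∈ R, InWOTClosure
      ((Algebra.adjoin ℂ ({x | ∃ i j, x = e i j} ∪
        {x | x ∈ R ∧ ∀ i j, x * e i j = e i j * x}) :
          Subalgebra ℂ (E →L[ℂ] E)) : Set (E →L[ℂ] E)) r)



/-! ### Auxiliary lemmas -/

section Aux

lemma aux_posStarMulSelf (T : E →L[ℂ] E) : (star T * T).IsPositive := by
  constructor
  · exact ContinuousLinearMap.isSelfAdjoint_iff_isSymmetric.mp (by simp [IsSelfAdjoint, star_mul])
  · intro x
    have hx : (star T * T) x = ContinuousLinearMap.adjoint T (T x) := by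
      rw [← ContinuousLinearMap.star_eq_adjoint]; rfl
    rw [ContinuousLinearMap.reApplyInnerSelf, hx, ContinuousLinearMap.adjoint_inner_left]
    exact inner_self_nonneg

lemma aux_conjPos {S T : E →L[ℂ] E} (hS : IsSelfAdjoint S) (hT : T.IsPositive) :
    (S * T * S).IsPositive := by
  have := hT.adjoint_conj S
  rw [← ContinuousLinearMap.star_eq_adjoint, hS.star_eq] at this
  exact this

lemma aux_sq_le {b : E →L[ℂ] E} (hb : b.IsPositive)
    (hb1 : ((1 : E →L[ℂ] E) - b).IsPositive) : (b - b * b).IsPositive := by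
  have key : b - b * b = (1 - b) * b * (1 - b) + b * (1 - b) * b := by noncomm_ring
  rw [key]
  exact (aux_conjPos hb1.isSelfAdjoint hb).add (aux_conjPos hb.isSelfAdjoint hb1)

lemma aux_pow_pos {b : E →L[ℂ] E} (hb : b.IsPositive)
    (hb1 : ((1 : E →L[ℂ] E) - b).IsPositive) (n : ℕ) : (b ^ n).IsPositive := by
  rcases Nat.even_or_odd n with ⟨k, hk⟩ | ⟨k, hk⟩
  · have : b ^ n = star (b ^ k) * b ^ k := by
      rw [(hb.isSelfAdjoint.pow k).star_eq, ← pow_add, hk]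
    rw [this]; exact aux_posStarMulSelf _
  · have : b ^ n = b ^ k * b * b ^ k := by
      rw [← pow_succ, ← pow_add, hk]; congr 1; omega
    rw [this]; exact aux_conjPos (hb.isSelfAdjoint.pow k) hb

lemma aux_pow_step {b : E →L[ℂ] E} (hb : b.IsPositive)
    (hb1 : ((1 : E →L[ℂ] E) - b).IsPositive) (n : ℕ) :
    (b ^ n - b ^ (n + 1)).IsPositive := by
  rcases Nat.even_or_odd n with ⟨k, hk⟩ | ⟨k, hk⟩
  · have e1 : b ^ k * b ^ k = b ^ n := by rw [← pow_add, hk]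
    have e2 : b ^ k * b * b ^ k = b ^ (n + 1) := by
      rw [← pow_succ, ← pow_add]; congr 1; omega
    have : b ^ n - b ^ (n + 1) = b ^ k * (1 - b) * b ^ k := by
      rw [mul_sub, mul_one, sub_mul, e1, e2]
    rw [this]; exact aux_conjPos (hb.isSelfAdjoint.pow k) hb1
  · have e3 : b ^ k * b * b ^ k = b ^ n := by
      rw [← pow_succ, ← pow_add]; congr 1; omega
    have e4 : b ^ k * (b * b) * b ^ k = b ^ (n + 1) := by
      rw [show b * b = b ^ 2 from (pow_two b).symm, ← pow_add, ← pow_add]; congr 1; omega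
    have : b ^ n - b ^ (n + 1) = b ^ k * (b - b * b) * b ^ k := by
      rw [mul_sub, sub_mul, e3, e4]
    rw [this]; exact aux_conjPos (hb.isSelfAdjoint.pow k) (aux_sq_le hb hb1)

lemma aux_pow_mono {b : E →L[ℂ] E} (hb : b.IsPositive)
    (hb1 : ((1 : E →L[ℂ] E) - b).IsPositive) {n m : ℕ} (h : n ≤ m) :
    (b ^ n - b ^ m).IsPositive := by
  induction m with
  | zero =>
    have : n = 0 := Nat.le_zero.mp h
    subst this; rw [sub_self]; exact ContinuousLinearMap.isPositive_zero
  | succ m ih =>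
    rcases Nat.lt_or_ge n (m + 1) with hlt | hge
    · have h1 := ih (Nat.lt_succ_iff.mp hlt)
      have := h1.add (aux_pow_step hb hb1 m)
      simpa [sub_add_sub_cancel] using this
    · have : n = m + 1 := le_antisymm h hge
      subst this; rw [sub_self]; exact ContinuousLinearMap.isPositive_zero

lemma aux_one_sub_pow {b : E →L[ℂ] E} (hb : b.IsPositive)
    (hb1 : ((1 : E →L[ℂ] E) - b).IsPositive) (n : ℕ) :
    ((1 : E →L[ℂ] E) - b ^ n).IsPositive := by
  simpa using aux_pow_mono hb hb1 (Nat.zero_le n)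

lemma aux_normsq_le {T : E →L[ℂ] E} (hT : T.IsPositive)
    (hT1 : ((1 : E →L[ℂ] E) - T).IsPositive) (ξ : E) :
    ‖T ξ‖ ^ 2 ≤ ((inner ℂ (T ξ) ξ : ℂ)).re := by
  have h1 := (aux_sq_le hT hT1).re_inner_nonneg_left ξ
  simp only [RCLike.re_to_complex] at h1
  have h2 : (inner ℂ ((T * T) ξ) ξ : ℂ) = inner ℂ (T ξ) (T ξ) := by
    have hx : (T * T) ξ = T (T ξ) := rfl
    rw [hx]
    nth_rewrite 1 [← hT.isSelfAdjoint.adjoint_eq]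
    rw [ContinuousLinearMap.adjoint_inner_left]
  have h3 : ((inner ℂ ((T * T) ξ) ξ : ℂ)).re = ‖T ξ‖ ^ 2 := by
    rw [h2, ← RCLike.re_to_complex]
    exact inner_self_eq_norm_sq _
  have h4 : ((inner ℂ ((T - T * T) ξ) ξ : ℂ)).re
      = ((inner ℂ (T ξ) ξ : ℂ)).re - ‖T ξ‖ ^ 2 := by
    rw [ContinuousLinearMap.sub_apply, inner_sub_left, Complex.sub_re, h3]
  linarith

lemma aux_norm_le {T : E →L[ℂ] E} (hT : T.IsPositive)
    (hT1 : ((1 : E →L[ℂ] E) - T).IsPositive) (ξ : E) : ‖T ξ‖ ≤ ‖ξ‖ := by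
  rcases eq_or_ne (T ξ) 0 with h | h
  · simp [h]
  · have h1 := aux_normsq_le hT hT1 ξ
    have h2 : ((inner ℂ (T ξ) ξ : ℂ)).re ≤ ‖T ξ‖ * ‖ξ‖ := by
      calc ((inner ℂ (T ξ) ξ : ℂ)).re ≤ ‖(inner ℂ (T ξ) ξ : ℂ)‖ := Complex.re_le_norm _
        _ ≤ ‖T ξ‖ * ‖ξ‖ := norm_inner_le_norm _ _
    have h3 : 0 < ‖T ξ‖ := norm_pos_iff.mpr h
    nlinarith

open Filter in
/-- Existence of range projections of positive contractions in a von Neumann algebra,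
together with the two comparison facts we need. -/
lemma exists_rangeProj (N : VonNeumannAlgebra E) {a : E →L[ℂ] E} (haN : a ∈ N)
    (ha : a.IsPositive) (ha1 : ((1 : E →L[ℂ] E) - a).IsPositive) :
    ∃ r, IsRangeProjection N a r ∧ (r - a).IsPositive ∧
      ∀ c, c.IsPositive → ((1 : E →L[ℂ] E) - c).IsPositive → c * a = a →
        (c - r).IsPositive := by
  set b : E →L[ℂ] E := 1 - a with hbdef
  have hb : b.IsPositive := ha1
  have hb1 : ((1 : E →L[ℂ] E) - b).IsPositive := by
    rw [hbdef, sub_sub_cancel]; exact ha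
  have hbsa : IsSelfAdjoint b := hb.isSelfAdjoint
  have hbN : b ∈ N := sub_mem (one_mem N) haN
  have hconv : ∀ ξ : E, ∃ l : E, Tendsto (fun n => (b ^ n) ξ) atTop (nhds l) := by
    intro ξ
    apply cauchySeq_tendsto_of_complete
    set d : ℕ → ℝ := fun n => ((inner ℂ ((b ^ n) ξ) ξ : ℂ)).re with hd
    have hstep : ∀ {n m : ℕ}, n ≤ m → d m ≤ d n := by
      intro n m hnm
      have := (aux_pow_mono hb hb1 hnm).re_inner_nonneg_left ξ
      simp only [RCLike.re_to_complex, ContinuousLinearMap.sub_apply, inner_sub_left,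
        Complex.sub_re] at this
      simp only [hd]; linarith
    have hbdd : ∀ n, 0 ≤ d n := fun n => by
      have := (aux_pow_pos hb hb1 n).re_inner_nonneg_left ξ
      simpa [hd, RCLike.re_to_complex] using this
    have hdc : CauchySeq d := by
      have ht : Tendsto d atTop (nhds (⨅ n, d n)) :=
        tendsto_atTop_ciInf (fun n m hnm => hstep hnm) ⟨0, fun x ⟨n, hn⟩ => hn ▸ hbdd n⟩
      exact ht.cauchySeq
    rw [Metric.cauchySeq_iff] at hdc ⊢
    intro ε hε
    obtain ⟨M, hM⟩ := hdc (ε ^ 2) (by positivity)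
    refine ⟨M, fun m hm n hn => ?_⟩
    have key : ∀ {i j : ℕ}, i ≤ j → M ≤ i → M ≤ j →
        dist ((b ^ j) ξ) ((b ^ i) ξ) < ε := by
      intro i j hij hi hj
      set T : E →L[ℂ] E := b ^ i - b ^ j with hT
      have hTpos : T.IsPositive := aux_pow_mono hb hb1 hij
      have hTle : ((1 : E →L[ℂ] E) - T).IsPositive := by
        have : (1 : E →L[ℂ] E) - T = (1 - b ^ i) + b ^ j := by rw [hT]; abel
        rw [this]; exact (aux_one_sub_pow hb hb1 i).add (aux_pow_pos hb hb1 j)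
      have h1 : ‖T ξ‖ ^ 2 ≤ ((inner ℂ (T ξ) ξ : ℂ)).re := aux_normsq_le hTpos hTle ξ
      have h2 : ((inner ℂ (T ξ) ξ : ℂ)).re = d i - d j := by
        simp only [hT, hd, ContinuousLinearMap.sub_apply, inner_sub_left, Complex.sub_re]
      have h3 : d i - d j < ε ^ 2 := by
        have h5 := hM i hi j hj
        rw [Real.dist_eq] at h5
        have := abs_lt.mp h5
        linarith [this.2]
      have h4 : dist ((b ^ j) ξ) ((b ^ i) ξ) = ‖T ξ‖ := by
        rw [dist_eq_norm, hT, ContinuousLinearMap.sub_apply, norm_sub_rev]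
      rw [h4]
      nlinarith [norm_nonneg (T ξ)]
    rcases le_total m n with hmn | hnm
    · rw [dist_comm]; exact key hmn hm hn
    · exact key hnm hn hm
  choose qf hqf using hconv
  have hadd : ∀ ξ η, qf (ξ + η) = qf ξ + qf η := by
    intro ξ η
    refine tendsto_nhds_unique (hqf (ξ + η)) ?_
    have := (hqf ξ).add (hqf η)
    simpa [map_add] using this
  have hsmul : ∀ (c : ℂ) ξ, qf (c • ξ) = c • qf ξ := by
    intro c ξ
    refine tendsto_nhds_unique (hqf (c • ξ)) ?_
    have := (hqf ξ).const_smul c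
    simpa [map_smul] using this
  have hbound : ∀ ξ, ‖qf ξ‖ ≤ ‖ξ‖ := by
    intro ξ
    refine le_of_tendsto (hqf ξ).norm (Filter.Eventually.of_forall fun n => ?_)
    exact aux_norm_le (aux_pow_pos hb hb1 n) (aux_one_sub_pow hb hb1 n) ξ
  set q : E →L[ℂ] E :=
    LinearMap.mkContinuous
      { toFun := qf, map_add' := hadd, map_smul' := hsmul } 1
      (fun ξ => by simpa using hbound ξ) with hqdef
  have hq : ∀ ξ, Tendsto (fun n => (b ^ n) ξ) atTop (nhds (q ξ)) := fun ξ => hqf ξ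
  have hbq : b * q = q := by
    ext ξ
    have h1 : Tendsto (fun n => b ((b ^ n) ξ)) atTop (nhds (b (q ξ))) :=
      (b.continuous.tendsto _).comp (hq ξ)
    have h2 : Tendsto (fun n => b ((b ^ n) ξ)) atTop (nhds (q ξ)) := by
      have : (fun n => b ((b ^ n) ξ)) = fun n => (b ^ (n + 1)) ξ := by
        funext n; rw [pow_succ']; rfl
      rw [this]
      exact (hq ξ).comp (tendsto_add_atTop_nat 1)
    exact tendsto_nhds_unique h1 h2
  have hqb : q * b = q := by
    ext ξ
    have h2 : Tendsto (fun n => (b ^ n) (b ξ)) atTop (nhds (q ξ)) := by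
      have : (fun n => (b ^ n) (b ξ)) = fun n => (b ^ (n + 1)) ξ := by
        funext n; rw [pow_succ]; rfl
      rw [this]
      exact (hq ξ).comp (tendsto_add_atTop_nat 1)
    exact tendsto_nhds_unique (hq (b ξ)) h2
  have hbnq : ∀ n, b ^ n * q = q := by
    intro n
    induction n with
    | zero => simp
    | succ n ih => rw [pow_succ', mul_assoc, ih, hbq]
  have hqN : q ∈ N := by
    have hmem : q ∈ Set.centralizer (Set.centralizer (N : Set (E →L[ℂ] E))) := by
      rw [Set.mem_centralizer_iff]
      intro g hg
      ext ξ
      have hgb : ∀ n, g * b ^ n = b ^ n * g := fun n => (hg (b ^ n) (pow_mem hbN n)).symm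
      have h1 : Tendsto (fun n => g ((b ^ n) ξ)) atTop (nhds (g (q ξ))) :=
        (g.continuous.tendsto _).comp (hq ξ)
      have h2 : Tendsto (fun n => g ((b ^ n) ξ)) atTop (nhds (q (g ξ))) := by
        have : (fun n => g ((b ^ n) ξ)) = fun n => (b ^ n) (g ξ) := by
          funext n
          have := congrFun (congrArg DFunLike.coe (hgb n)) ξ
          simpa using this
        rw [this]; exact hq (g ξ)
      have : g (q ξ) = q (g ξ) := tendsto_nhds_unique h1 h2
      simpa using this
    rw [N.centralizer_centralizer] at hmem
    exact hmem
  have hqsa : IsSelfAdjoint q := by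
    have : q = ContinuousLinearMap.adjoint q := by
      rw [ContinuousLinearMap.eq_adjoint_iff]
      intro x y
      have h1 : Tendsto (fun n => (inner ℂ ((b ^ n) x) y : ℂ)) atTop (nhds (inner ℂ (q x) y)) :=
        (hq x).inner tendsto_const_nhds
      have h2 : Tendsto (fun n => (inner ℂ ((b ^ n) x) y : ℂ)) atTop (nhds (inner ℂ x (q y))) := by
        have heq : (fun n => (inner ℂ ((b ^ n) x) y : ℂ))
            = fun n => (inner ℂ x ((b ^ n) y) : ℂ) := by
          funext n
          nth_rewrite 1 [← (hbsa.pow n).adjoint_eq]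
          rw [ContinuousLinearMap.adjoint_inner_left]
        rw [heq]
        exact Filter.Tendsto.inner tendsto_const_nhds (hq y)
      exact tendsto_nhds_unique h1 h2
    rw [ContinuousLinearMap.isSelfAdjoint_iff']
    exact this.symm
  have hqq : q * q = q := by
    ext ξ
    have h2 : Tendsto (fun n => (b ^ n) (q ξ)) atTop (nhds (q ξ)) := by
      have : (fun n => (b ^ n) (q ξ)) = fun _ => q ξ := by
        funext n
        have := congrFun (congrArg DFunLike.coe (hbnq n)) ξ
        simpa using this
      rw [this]; exact tendsto_const_nhds
    exact tendsto_nhds_unique (hq (q ξ)) h2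
  have haq : a * q = 0 := by
    have : a = 1 - b := by rw [hbdef, sub_sub_cancel]
    rw [this, sub_mul, one_mul, hbq, sub_self]
  have hqa : q * a = 0 := by
    have : a = 1 - b := by rw [hbdef, sub_sub_cancel]
    rw [this, mul_sub, mul_one, hqb, sub_self]
  have hWq : ∀ w : E →L[ℂ] E, w * a = a → w * q = q - (1 - w) := by
    intro w hwa
    have h1 : (1 - w) * a = 0 := by rw [sub_mul, one_mul, hwa, sub_self]
    have h2 : (1 - w) * b = 1 - w := by
      rw [hbdef, mul_sub, mul_one, h1, sub_zero]
    have h3 : ∀ n, (1 - w) * b ^ n = 1 - w := by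
      intro n
      induction n with
      | zero => simp
      | succ n ih => rw [pow_succ, ← mul_assoc, ih, h2]
    have h4 : (1 - w) * q = 1 - w := by
      ext ξ
      have ha1 : Tendsto (fun n => ((1 - w) : E →L[ℂ] E) ((b ^ n) ξ)) atTop
          (nhds (((1 - w) : E →L[ℂ] E) (q ξ))) :=
        ((((1 : E →L[ℂ] E) - w)).continuous.tendsto _).comp (hq ξ)
      have ha2 : (fun n => ((1 - w) : E →L[ℂ] E) ((b ^ n) ξ))
          = fun _ => ((1 - w) : E →L[ℂ] E) ξ := by
        funext n
        have := congrFun (congrArg DFunLike.coe (h3 n)) ξ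
        simpa using this
      rw [ha2] at ha1
      have := tendsto_nhds_unique ha1 tendsto_const_nhds
      simpa using this
    have h5 : q - w * q = 1 - w := by
      rw [← h4, sub_mul, one_mul]
    rw [← h5]; abel
  set r : E →L[ℂ] E := 1 - q with hrdef
  have hrN : r ∈ N := sub_mem (one_mem _) hqN
  have hrr : r * r = r := by
    rw [hrdef, mul_sub, mul_one, sub_mul, one_mul, hqq]
    abel
  have hrsa : star r = r := by
    rw [hrdef, star_sub, star_one, hqsa.star_eq]
  have hra : r * a = a := by
    rw [hrdef, sub_mul, one_mul, hqa, sub_zero]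
  have har : a * r = a := by
    rw [hrdef, mul_sub, mul_one, haq, sub_zero]
  refine ⟨r, ⟨⟨hrN, hrr, hrsa⟩, hra, ?_⟩, ?_, ?_⟩
  · intro w hw hwa
    have := hWq w hwa
    rw [hrdef, mul_sub, mul_one, this]
    abel
  · have e1 : r * b = r - a := by
      rw [hbdef, mul_sub, mul_one, hra]
    have key : r * b * r = r - a := by
      rw [e1, sub_mul, hrr, har]
    rw [← key]
    exact aux_conjPos hrsa hb
  · intro c hc hc1 hca
    have hcr : c * r = r := by
      have := hWq c hca
      rw [hrdef, mul_sub, mul_one, this]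
      abel
    have hrc : r * c = r := by
      have h1 : star (c * r) = r * c := by
        rw [star_mul, hc.isSelfAdjoint.star_eq, hrsa]
      rw [← h1, hcr, hrsa]
    have key2 : c - r = (1 - r) * c * (1 - r) := by
      rw [sub_mul, one_mul, hrc, mul_sub, mul_one, sub_mul, hcr, hrr]
      abel
    rw [key2]
    have h1rsa : IsSelfAdjoint ((1 : E →L[ℂ] E) - r) := by
      rw [IsSelfAdjoint, star_sub, star_one, hrsa]
    exact aux_conjPos h1rsa hc

/-- the clamp function for the layer-cake decomposition -/
def gg (s : ℝ) (k : ℕ) : ℝ := min 1 (max 0 (s - k))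

lemma gg_nonneg (s : ℝ) (k : ℕ) : 0 ≤ gg s k :=
  le_min zero_le_one (le_max_left _ _)

lemma gg_le_one (s : ℝ) (k : ℕ) : gg s k ≤ 1 := min_le_left _ _

lemma gg_mul (t : ℝ) (k : ℕ) : gg t k * gg t (k + 1) = gg t (k + 1) := by
  rcases le_or_gt (t - (k + 1 : ℕ)) 0 with hle | hlt
  · have h1 : gg t (k + 1) = 0 := by
      rw [gg, max_eq_left hle, min_eq_right zero_le_one]
    rw [h1, mul_zero]
  · have h2 : (1 : ℝ) ≤ t - k := by push_cast at hlt ⊢; linarith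
    have h1 : gg t k = 1 := by
      rw [gg, max_eq_right (by linarith), min_eq_left h2]
    rw [h1, one_mul]

lemma gg_sum (K : ℕ) (s : ℝ) (hs : 0 ≤ s) :
    ∑ k ∈ Finset.range K, gg s k = min s K := by
  induction K with
  | zero => simp [min_eq_right hs]
  | succ K ih =>
    rw [Finset.sum_range_succ, ih]
    rcases le_total s K with h | h
    · have h1 : gg s K = 0 := by
        rw [gg, max_eq_left (by linarith), min_eq_right zero_le_one]
      rw [h1, min_eq_left h, min_eq_left (by push_cast; linarith), add_zero]
    · have h1 : gg s K = min 1 (s - K) := by rw [gg, max_eq_right (by linarith)]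
      rw [h1, min_eq_right h]
      rcases le_total (s - K) 1 with h2 | h2
      · rw [min_eq_right h2, min_eq_left (by push_cast; linarith)]
        push_cast; ring
      · rw [min_eq_left h2, min_eq_right (by push_cast; linarith)]
        push_cast; ring

/-- positivity of images of nonnegative functions under multiplicative star maps -/
lemma hom_pos {X : Type} [TopologicalSpace X] (π : C(X, ℂ) → (E →L[ℂ] E))
    (hmul : ∀ f g : C(X, ℂ), π (f * g) = π f * π g)
    (hstar : ∀ f : C(X, ℂ), π (star f) = star (π f))
    (f : C(X, ℂ)) (hf : ∀ x, 0 ≤ f x) : (π f).IsPositive := by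
  set g : C(X, ℂ) := ⟨fun x => ((Real.sqrt ((f x).re) : ℝ) : ℂ),
    Complex.continuous_ofReal.comp (Real.continuous_sqrt.comp
      (Complex.continuous_re.comp f.continuous))⟩ with hgdef
  have hgs : star g = g := by
    ext x
    simp only [ContinuousMap.star_apply, hgdef, ContinuousMap.coe_mk]
    exact Complex.conj_ofReal _
  have hgg : g * g = f := by
    ext x
    simp only [ContinuousMap.mul_apply, hgdef, ContinuousMap.coe_mk]
    have him : (f x).im = 0 := ((Complex.le_def.mp (hf x)).2).symm
    have hre : 0 ≤ (f x).re := by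
      have := (Complex.le_def.mp (hf x)).1
      simpa using this
    rw [← Complex.ofReal_mul, Real.mul_self_sqrt hre]
    exact Complex.ext (by simp) (by simp [him])
  have : π f = star (π g) * π g := by
    rw [← hstar, hgs, ← hmul, hgg]
  rw [this]
  exact aux_posStarMulSelf _

lemma proj_pos {p : E →L[ℂ] E} (hpp : p * p = p) (hps : star p = p) : p.IsPositive := by
  refine ⟨ContinuousLinearMap.isSelfAdjoint_iff_isSymmetric.mp hps, fun ξ => ?_⟩
  rw [ContinuousLinearMap.reApplyInnerSelf]
  have h1 : p ξ = p (p ξ) := by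
    conv_lhs => rw [← hpp]
    rfl
  rw [h1]
  nth_rewrite 1 [show p = ContinuousLinearMap.adjoint p by
    rw [← ContinuousLinearMap.star_eq_adjoint, hps]]
  rw [ContinuousLinearMap.adjoint_inner_left]
  exact inner_self_nonneg

end Aux

/-- for unital ∗-homomorphisms `π : C(X) → N` and `ρ : C(X) → pNp`
of a unital separable abelian C*-algebra `C(X)` (`X` a compact metric space)
into a type II₁ factor `(N,τ)` with separable predual, if
`τ(R(ρ f)) ≤ τ(R(π f))` for all `f`, then `τ(ρ h) ≤ τ(π h)` for all positive `h`. -/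
theorem stmt_0
    {H : Type} [NormedAddCommGroup H] [InnerProductSpace ℂ H] [CompleteSpace H]
    {X : Type} [MetricSpace X] [CompactSpace X]
    (N : VonNeumannAlgebra H) (τ : (H →L[ℂ] H) → ℂ)
    (hN : IsTypeII1Factor N τ)
    (hsep : TopologicalSpace.SeparableSpace H)
    (p : H →L[ℂ] H) (hp : MemProj N p)
    (π ρ : C(X, ℂ) → (H →L[ℂ] H))
    (hπ : IsStarHomOn (Set.univ : Set C(X, ℂ)) π)
    (hπ1 : π 1 = 1)
    (hπmem : ∀ f : C(X, ℂ), π f ∈ N)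
    (hρ : IsStarHomOn (Set.univ : Set C(X, ℂ)) ρ)
    (hρ1 : ρ 1 = p)
    (hρmem : ∀ f : C(X, ℂ), ρ f ∈ N ∧ p * ρ f = ρ f ∧ ρ f * p = ρ f)
    (htr : ∀ (f : C(X, ℂ)) (rπ rρ : H →L[ℂ] H),
        IsRangeProjection N (π f) rπ → IsRangeProjection N (ρ f) rρ → τ rρ ≤ τ rπ) :
    ∀ h : C(X, ℂ), (∀ x : X, 0 ≤ h x) → τ (ρ h) ≤ τ (π h) := by
  -- unpack the trace axioms we need
  obtain ⟨-, -, τadd, τsmul, τone, -, τpos, -, -⟩ := hN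
  have τ0 : τ 0 = 0 := by
    have h := τadd 0 (zero_mem N) 0 (zero_mem N)
    rw [add_zero] at h
    exact (left_eq_add.mp h)
  have τmono : ∀ x y : H →L[ℂ] H, x ∈ N → y ∈ N → (y - x).IsPositive → τ x ≤ τ y := by
    intro x y hx hy hpos
    have hyx : y - x ∈ N := sub_mem hy hx
    have h := τadd x hx (y - x) hyx
    have hxy : x + (y - x) = y := by abel
    rw [hxy] at h
    rw [h]
    exact le_add_of_nonneg_right (τpos _ hyx hpos)
  have τsum : ∀ (K : ℕ) (f : ℕ → (H →L[ℂ] H)), (∀ i, f i ∈ N) →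
      τ (∑ k ∈ Finset.range K, f k) = ∑ k ∈ Finset.range K, τ (f k) := by
    intro K f hf
    induction K with
    | zero => simpa using τ0
    | succ K ih =>
      rw [Finset.sum_range_succ, Finset.sum_range_succ,
        τadd _ (sum_mem fun i _ => hf i) _ (hf K), ih]
  -- unpack the homomorphism axioms
  obtain ⟨πa, πm, πs, πst⟩ := hπ
  obtain ⟨ρa, ρm, ρs, ρst⟩ := hρ
  have πadd : ∀ f g : C(X, ℂ), π (f + g) = π f + π g := fun f g =>
    πa f trivial g trivial
  have πmul : ∀ f g : C(X, ℂ), π (f * g) = π f * π g := fun f g =>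
    πm f trivial g trivial
  have πsmul : ∀ (c : ℂ) (f : C(X, ℂ)), π (c • f) = c • π f := fun c f =>
    πs c f trivial
  have πstar : ∀ f : C(X, ℂ), π (star f) = star (π f) := fun f => πst f trivial
  have ρadd : ∀ f g : C(X, ℂ), ρ (f + g) = ρ f + ρ g := fun f g =>
    ρa f trivial g trivial
  have ρmul : ∀ f g : C(X, ℂ), ρ (f * g) = ρ f * ρ g := fun f g =>
    ρm f trivial g trivial
  have ρsmul : ∀ (c : ℂ) (f : C(X, ℂ)), ρ (c • f) = c • ρ f := fun c f =>
    ρs c f trivial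
  have ρstar : ∀ f : C(X, ℂ), ρ (star f) = star (ρ f) := fun f => ρst f trivial
  have π0 : π 0 = 0 := by
    have h := πadd 0 0
    rw [add_zero] at h
    exact (left_eq_add.mp h)
  have ρ0 : ρ 0 = 0 := by
    have h := ρadd 0 0
    rw [add_zero] at h
    exact (left_eq_add.mp h)
  have πsum : ∀ (K : ℕ) (f : ℕ → C(X, ℂ)),
      π (∑ k ∈ Finset.range K, f k) = ∑ k ∈ Finset.range K, π (f k) := by
    intro K f
    induction K with
    | zero => simpa using π0
    | succ K ih => rw [Finset.sum_range_succ, Finset.sum_range_succ, πadd, ih]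
  have ρsum : ∀ (K : ℕ) (f : ℕ → C(X, ℂ)),
      ρ (∑ k ∈ Finset.range K, f k) = ∑ k ∈ Finset.range K, ρ (f k) := by
    intro K f
    induction K with
    | zero => simpa using ρ0
    | succ K ih => rw [Finset.sum_range_succ, Finset.sum_range_succ, ρadd, ih]
  have πpos : ∀ f : C(X, ℂ), (∀ x, 0 ≤ f x) → (π f).IsPositive :=
    hom_pos π πmul πstar
  have ρpos : ∀ f : C(X, ℂ), (∀ x, 0 ≤ f x) → (ρ f).IsPositive :=
    hom_pos ρ ρmul ρstar
  have hpsub : ∀ f : C(X, ℂ), ρ (1 - f) = p - ρ f := by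
    intro f
    have h := ρadd (1 - f) f
    rw [sub_add_cancel, hρ1] at h
    exact eq_sub_of_add_eq h.symm
  have hπsub : ∀ f : C(X, ℂ), π (1 - f) = 1 - π f := by
    intro f
    have h := πadd (1 - f) f
    rw [sub_add_cancel, hπ1] at h
    exact eq_sub_of_add_eq h.symm
  have hp1pos : ((1 : H →L[ℂ] H) - p).IsPositive := by
    refine proj_pos ?_ ?_
    · have : ((1 : H →L[ℂ] H) - p) * ((1 : H →L[ℂ] H) - p)
          = 1 - p - p + p * p := by noncomm_ring
      rw [this, hp.2.1]; abel
    · rw [star_sub, star_one, hp.2.2]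
  have hsub1 : ∀ f : C(X, ℂ), (∀ x, 0 ≤ f x ∧ f x ≤ 1) →
      ((1 : H →L[ℂ] H) - π f).IsPositive := by
    intro f hf
    rw [← hπsub]
    refine πpos _ fun x => ?_
    have := (hf x).2
    simp only [ContinuousMap.sub_apply, ContinuousMap.one_apply]
    rwa [← sub_nonneg] at this
  have hsub2 : ∀ f : C(X, ℂ), (∀ x, 0 ≤ f x ∧ f x ≤ 1) →
      ((1 : H →L[ℂ] H) - ρ f).IsPositive := by
    intro f hf
    have h1 : (p - ρ f).IsPositive := by
      rw [← hpsub]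
      refine ρpos _ fun x => ?_
      have := (hf x).2
      simp only [ContinuousMap.sub_apply, ContinuousMap.one_apply]
      rwa [← sub_nonneg] at this
    have : (1 : H →L[ℂ] H) - ρ f = ((1 : H →L[ℂ] H) - p) + (p - ρ f) := by abel
    rw [this]
    exact hp1pos.add h1
  -- the main estimate
  intro h hh
  have hρhpos : (ρ h).IsPositive := ρpos h hh
  have hπhpos : (π h).IsPositive := πpos h hh
  have key : ∀ δ : ℝ, 0 < δ → τ (ρ h) ≤ τ (π h) + (δ : ℂ) := by
    intro δ hδ
    set K0 : ℕ := ⌈‖h‖ / δ⌉₊ with hK0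
    set K : ℕ := K0 + 1 with hK
    have hs0 : ∀ x : X, 0 ≤ (h x).re := fun x => by
      have := (Complex.le_def.mp (hh x)).1
      simpa using this
    have hsK : ∀ x : X, (h x).re / δ ≤ (K : ℝ) := by
      intro x
      have h1 : (h x).re ≤ ‖h x‖ := by
        exact Complex.re_le_norm _
      have h2 : ‖h x‖ ≤ ‖h‖ := h.norm_coe_le_norm x
      have h3 : (h x).re / δ ≤ ‖h‖ / δ := by gcongr; linarith
      have h4 : ‖h‖ / δ ≤ (K0 : ℝ) := Nat.le_ceil _
      have h5 : (K0 : ℝ) ≤ (K : ℝ) := by rw [hK]; push_cast; linarith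
      linarith
    -- the layer-cake functions
    set vv : ℕ → C(X, ℂ) := fun k =>
      ⟨fun x => ((gg ((h x).re / δ) k : ℝ) : ℂ),
        Complex.continuous_ofReal.comp
          (continuous_const.min (continuous_const.max
            (((Complex.continuous_re.comp h.continuous).div_const δ).sub
              continuous_const)))⟩ with hvv
    have hvapp : ∀ k x, vv k x = ((gg ((h x).re / δ) k : ℝ) : ℂ) := fun k x => rfl
    have hv01 : ∀ k x, 0 ≤ vv k x ∧ vv k x ≤ 1 := by
      intro k x
      rw [hvapp]
      constructor
      · rw [Complex.le_def]
        constructor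
        · simpa using gg_nonneg _ _
        · simp
      · rw [Complex.le_def]
        constructor
        · simpa using gg_le_one _ _
        · simp
    have hv0 : ∀ k x, 0 ≤ vv k x := fun k x => (hv01 k x).1
    have hvmul : ∀ k, vv k * vv (k + 1) = vv (k + 1) := by
      intro k
      ext x
      rw [ContinuousMap.mul_apply]
      show ((gg ((h x).re / δ) k : ℝ) : ℂ) * ((gg ((h x).re / δ) (k+1) : ℝ) : ℂ)
        = ((gg ((h x).re / δ) (k+1) : ℝ) : ℂ)
      rw [← Complex.ofReal_mul, gg_mul]
    have hsumv : h = (δ : ℂ) • ∑ k ∈ Finset.range K, vv k := by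
      ext x
      rw [ContinuousMap.smul_apply, ContinuousMap.sum_apply]
      have e1 : ∑ k ∈ Finset.range K, vv k x
          = ((∑ k ∈ Finset.range K, gg ((h x).re / δ) k : ℝ) : ℂ) := by
        rw [Complex.ofReal_sum]
        exact Finset.sum_congr rfl fun k _ => hvapp k x
      rw [e1, gg_sum K _ (div_nonneg (hs0 x) hδ.le), min_eq_left (hsK x)]
      rw [smul_eq_mul, ← Complex.ofReal_mul, mul_div_cancel₀ _ (ne_of_gt hδ)]
      have him : (h x).im = 0 := ((Complex.le_def.mp (hh x)).2).symm
      exact (Complex.ext (by simp) (by simp [him])).symm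
    -- comparison elements
    set cc : ℕ → (H →L[ℂ] H) := fun k => if k = 0 then 1 else π (vv (k - 1)) with hcc
    have hccN : ∀ k, cc k ∈ N := by
      intro k
      rw [hcc]
      rcases Nat.eq_zero_or_pos k with h0 | h0
      · simp [h0, one_mem]
      · simp only [Nat.pos_iff_ne_zero.mp h0, if_false]
        exact hπmem _
    have hccmul : ∀ k, cc k * π (vv k) = π (vv k) := by
      intro k
      rw [hcc]
      match k with
      | 0 => simp
      | Nat.succ j =>
        simp only [Nat.succ_ne_zero, if_false, Nat.succ_sub_one]
        rw [← πmul, hvmul]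
    have hccpos : ∀ k, (cc k).IsPositive := by
      intro k
      rw [hcc]
      match k with
      | 0 => simpa using ContinuousLinearMap.isPositive_one
      | Nat.succ j =>
        simp only [Nat.succ_ne_zero, if_false, Nat.succ_sub_one]
        exact πpos _ (hv0 j)
    have hcc1 : ∀ k, ((1 : H →L[ℂ] H) - cc k).IsPositive := by
      intro k
      rw [hcc]
      match k with
      | 0 => simpa using ContinuousLinearMap.isPositive_zero
      | Nat.succ j =>
        simp only [Nat.succ_ne_zero, if_false, Nat.succ_sub_one]
        exact hsub1 _ (hv01 j)
    -- the per-level trace comparison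
    have main : ∀ k, τ (ρ (vv k)) ≤ τ (cc k) := by
      intro k
      obtain ⟨rρ, hrρ, hrρge, -⟩ :=
        exists_rangeProj N (hρmem (vv k)).1 (ρpos _ (hv0 k)) (hsub2 _ (hv01 k))
      obtain ⟨rπ, hrπ, -, hrπle⟩ :=
        exists_rangeProj N (hπmem (vv k)) (πpos _ (hv0 k)) (hsub1 _ (hv01 k))
      have step1 : τ (ρ (vv k)) ≤ τ rρ :=
        τmono _ _ (hρmem (vv k)).1 hrρ.1.1 hrρge
      have step2 : τ rρ ≤ τ rπ := htr (vv k) rπ rρ hrπ hrρ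
      have step3 : τ rπ ≤ τ (cc k) :=
        τmono _ _ hrπ.1.1 (hccN k)
          (hrπle (cc k) (hccpos k) (hcc1 k) (hccmul k))
      exact step1.trans (step2.trans step3)
    -- summing up
    have hρmemN : ∀ f : C(X, ℂ), ρ f ∈ N := fun f => (hρmem f).1
    have hρh : τ (ρ h) = (δ : ℂ) * ∑ k ∈ Finset.range K, τ (ρ (vv k)) := by
      rw [hsumv, ρsmul, τsmul _ _ (by rw [ρsum]; exact sum_mem fun i _ => hρmemN _),
        ρsum, τsum K _ fun i => hρmemN _]
    have hπh : τ (π h) = (δ : ℂ) * ∑ k ∈ Finset.range K, τ (π (vv k)) := by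
      rw [hsumv, πsmul, τsmul _ _ (by rw [πsum]; exact sum_mem fun i _ => hπmem _),
        πsum, τsum K _ fun i => hπmem _]
    have hδC : (0 : ℂ) ≤ (δ : ℂ) := by
      rw [Complex.le_def]
      constructor
      · simpa using hδ.le
      · simp
    have hsum1 : ∑ k ∈ Finset.range K, τ (ρ (vv k)) ≤ ∑ k ∈ Finset.range K, τ (cc k) :=
      Finset.sum_le_sum fun k _ => main k
    have hccsum : ∑ k ∈ Finset.range K, τ (cc k)
        = 1 + ∑ j ∈ Finset.range K0, τ (π (vv j)) := by
      rw [hK, Finset.sum_range_succ']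
      have e0 : cc 0 = 1 := by simp [hcc]
      have e1 : ∀ i, cc (i + 1) = π (vv i) := by
        intro i
        simp [hcc]
      rw [e0, τone]
      rw [Finset.sum_congr rfl fun i _ => by rw [e1 i]]
      ring
    have hsum2 : ∑ j ∈ Finset.range K0, τ (π (vv j)) ≤ ∑ j ∈ Finset.range K, τ (π (vv j)) := by
      rw [hK, Finset.sum_range_succ]
      exact le_add_of_nonneg_right (τpos _ (hπmem _) (πpos _ (hv0 K0)))
    calc τ (ρ h) = (δ : ℂ) * ∑ k ∈ Finset.range K, τ (ρ (vv k)) := hρh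
      _ ≤ (δ : ℂ) * ∑ k ∈ Finset.range K, τ (cc k) :=
          mul_le_mul_of_nonneg_left hsum1 hδC
      _ = (δ : ℂ) * (1 + ∑ j ∈ Finset.range K0, τ (π (vv j))) := by rw [hccsum]
      _ ≤ (δ : ℂ) * (1 + ∑ j ∈ Finset.range K, τ (π (vv j))) :=
          mul_le_mul_of_nonneg_left (add_le_add_right hsum2 1) hδC
      _ = (δ : ℂ) + (δ : ℂ) * ∑ j ∈ Finset.range K, τ (π (vv j)) := by ring
      _ = τ (π h) + (δ : ℂ) := by rw [← hπh]; ring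
  have him1 : (τ (ρ h)).im = 0 :=
    ((Complex.le_def.mp (τpos _ (hρmem h).1 hρhpos)).2).symm
  have him2 : (τ (π h)).im = 0 :=
    ((Complex.le_def.mp (τpos _ (hπmem h) hπhpos)).2).symm
  have hre : (τ (ρ h)).re ≤ (τ (π h)).re := by
    by_contra hc
    push_neg at hc
    set ε : ℝ := ((τ (ρ h)).re - (τ (π h)).re) / 2 with hε
    have hεpos : 0 < ε := by rw [hε]; linarith
    have := key ε hεpos
    have h2 := (Complex.le_def.mp this).1
    rw [Complex.add_re, Complex.ofReal_re] at h2
    rw [hε] at h2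
    linarith
  exact Complex.le_def.mpr ⟨hre, him1.trans him2.symm⟩


end ShenShi
end
end

section
/- Let M be a von Neumann algebra with a faithful normal semifinite tracial weight τ, and let A be a *-subalgebra of F(M,τ) (the (M,τ)-finite-rank operators) that is the linear span of its positive part A₊. If ρ is a *-isomorphism of A into M that is approximately unitarily equivalent in M to the identity map of A (i.e., there are unitaries u_k ∈ M with lim_k ‖ρ(a) − u_k* a u_k‖ = 0 for every a ∈ A), then τ(ρ(a)) = τ(a) for every a ∈ A₊. -/
open scoped ComplexOrder ENNReal NNReal

noncomputable section

namespace ShenShi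

variable {E F : Type*}
  [NormedAddCommGroup E] [InnerProductSpace ℂ E] [CompleteSpace E]
  [NormedAddCommGroup F] [InnerProductSpace ℂ F] [CompleteSpace F]

/-! ### Auxiliary machinery for stmt_7 -/

section StmtSevenAux

variable {E : Type} [NormedAddCommGroup E] [InnerProductSpace ℂ E] [CompleteSpace E]

private lemma commute_aeval' {A : Type*} [Ring A] [Algebra ℝ A] {y x : A}
    (h : Commute y x) (p : Polynomial ℝ) : Commute y (Polynomial.aeval x p) := by
  induction p using Polynomial.induction_on with
  | C r => simpa only [Polynomial.aeval_C] using Algebra.commute_algebraMap_right r y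
  | add p q hp hq => simpa only [map_add] using hp.add_right hq
  | monomial n r hp =>
      have h' : (Polynomial.aeval x) (Polynomial.C r * Polynomial.X ^ (n + 1))
          = (Polynomial.aeval x) (Polynomial.C r * Polynomial.X ^ n) * x := by
        simp [pow_succ, mul_assoc]
      rw [h']
      exact hp.mul_right h

/-- A von Neumann algebra contains the continuous functional calculus of its
selfadjoint elements. -/
lemma cfc_mem_vN (M : VonNeumannAlgebra E) {X : E →L[ℂ] E} (hXM : X ∈ M)
    (hsa : IsSelfAdjoint X) {f : ℝ → ℝ} (hf : Continuous f) : cfc f X ∈ M := by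
  have hmem : ∀ g : C(spectrum ℝ X, ℝ), ∀ y, Commute y X → Commute y (cfcHom hsa g) := by
    intro g y hy
    let S : Subalgebra ℝ C(spectrum ℝ X, ℝ) :=
      { carrier := {g | Commute y (cfcHom hsa g)}
        mul_mem' := fun {a b : C(spectrum ℝ X, ℝ)} ha hb => by
          simpa only [Set.mem_setOf_eq, map_mul] using ha.mul_right hb
        add_mem' := fun {a b : C(spectrum ℝ X, ℝ)} ha hb => by
          simpa only [Set.mem_setOf_eq, map_add] using ha.add_right hb
        one_mem' := by
          simpa only [Set.mem_setOf_eq, map_one] using Commute.one_right y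
        zero_mem' := by
          simpa only [Set.mem_setOf_eq, map_zero] using Commute.zero_right y
        algebraMap_mem' := fun r => by
          simpa only [Set.mem_setOf_eq, AlgHomClass.commutes] using Algebra.commute_algebraMap_right r y }
    have hS_closed : IsClosed (S : Set C(spectrum ℝ X, ℝ)) := by
      have hc : Continuous (fun g : C(spectrum ℝ X, ℝ) => cfcHom hsa (R := ℝ) g) :=
        (cfcHom_isClosedEmbedding hsa).continuous
      exact isClosed_eq ((continuous_mul_left y).comp hc) ((continuous_mul_right y).comp hc)
    have hpoly : polynomialFunctions (spectrum ℝ X) ≤ S := by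
      rintro g hg
      rw [polynomialFunctions, Subalgebra.mem_map] at hg
      obtain ⟨p, -, rfl⟩ := hg
      show Commute y (cfcHom hsa (Polynomial.toContinuousMapOnAlgHom (spectrum ℝ X) p))
      have h1 : (Polynomial.toContinuousMapOnAlgHom (spectrum ℝ X)) p
          = Polynomial.aeval
              ((Polynomial.toContinuousMapOnAlgHom (spectrum ℝ X)) Polynomial.X) p := by
        rw [Polynomial.aeval_algHom_apply, Polynomial.aeval_X_left_apply]
      rw [h1, ← Polynomial.aeval_algHom_apply]
      have h2 : cfcHom hsa
          ((Polynomial.toContinuousMapOnAlgHom (spectrum ℝ X)) Polynomial.X) = X := by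
        have h3 : (Polynomial.toContinuousMapOnAlgHom (spectrum ℝ X)) Polynomial.X
            = (ContinuousMap.id ℝ).restrict (spectrum ℝ X) := by
          ext t; simp [Polynomial.toContinuousMapOn]
        rw [h3, cfcHom_id hsa]
      rw [h2]
      exact commute_aeval' hy p
    have htop : (⊤ : Subalgebra ℝ C(spectrum ℝ X, ℝ)) ≤ S := by
      rw [← polynomialFunctions.topologicalClosure (spectrum ℝ X)]
      exact Subalgebra.topologicalClosure_minimal hpoly hS_closed
    exact htop (by trivial)
  suffices h : cfc f X ∈ Set.centralizer (Set.centralizer (M : Set (E →L[ℂ] E))) by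
    rw [M.centralizer_centralizer] at h; exact h
  intro y hy
  have hyX : Commute y X := (hy X hXM).symm
  rw [cfc_apply f X hsa (hf.continuousOn)]
  exact hmem _ y hyX

lemma smul_mem_vN {M : VonNeumannAlgebra E} {x : E →L[ℂ] E} (hx : x ∈ M) (r : ℝ) :
    r • x ∈ M := by
  rw [← algebraMap_smul ℂ r x]
  exact M.toStarSubalgebra.smul_mem hx _

lemma isSelfAdjoint_of_nonneg {x : E →L[ℂ] E} (hx : 0 ≤ x) : IsSelfAdjoint x :=
  ((ContinuousLinearMap.nonneg_iff_isPositive x).mp hx).isSelfAdjoint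

lemma re_inner_ge_neg_norm (T : E →L[ℂ] E) (ξ : E) :
    -(‖T‖ * ‖ξ‖ ^ 2) ≤ RCLike.re (inner ℂ (T ξ) ξ : ℂ) := by
  have h1 : ‖(inner ℂ (T ξ) ξ : ℂ)‖ ≤ ‖T‖ * ‖ξ‖ ^ 2 := by
    refine (norm_inner_le_norm _ _).trans ?_
    rw [sq, ← mul_assoc]
    exact mul_le_mul_of_nonneg_right (T.le_opNorm ξ) (norm_nonneg ξ)
  have h2 := abs_le.mp (RCLike.abs_re_le_norm (inner ℂ (T ξ) ξ : ℂ))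
  linarith [h2.1]

/-- A norm limit of positive operators (with a selfadjoint limit) is positive. -/
lemma nonneg_of_tendsto_norm {T : E →L[ℂ] E} {g : ℕ → E →L[ℂ] E}
    (hsa : IsSelfAdjoint T) (hg : ∀ k, 0 ≤ g k)
    (hconv : Filter.Tendsto (fun k => ‖T - g k‖) Filter.atTop (nhds 0)) : 0 ≤ T := by
  rw [ContinuousLinearMap.nonneg_iff_isPositive]
  refine ContinuousLinearMap.isPositive_def'.mpr ⟨hsa, fun ξ => ?_⟩
  have key : ∀ k : ℕ, -(‖T - g k‖ * ‖ξ‖ ^ 2) ≤ T.reApplyInnerSelf ξ := by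
    intro k
    have hsplit : (inner ℂ (T ξ) ξ : ℂ) = inner ℂ ((T - g k) ξ) ξ + inner ℂ ((g k) ξ) ξ := by
      rw [← inner_add_left]
      congr 1
      simp
    have hk : 0 ≤ RCLike.re (inner ℂ ((g k) ξ) ξ : ℂ) :=
      (((ContinuousLinearMap.nonneg_iff_isPositive _).mp (hg k)).2 ξ)
    have := re_inner_ge_neg_norm (T - g k) ξ
    show -(‖T - g k‖ * ‖ξ‖ ^ 2) ≤ RCLike.re (inner ℂ (T ξ) ξ : ℂ)
    rw [hsplit, map_add]
    linarith
  have hlim : Filter.Tendsto (fun k => -(‖T - g k‖ * ‖ξ‖ ^ 2)) Filter.atTop (nhds 0) := by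
    simpa using (hconv.mul_const (‖ξ‖ ^ 2)).neg
  exact le_of_tendsto hlim (Filter.Eventually.of_forall key)

lemma unitary_apply_norm {u : E →L[ℂ] E} (h : star u * u = 1) (ξ : E) : ‖u ξ‖ = ‖ξ‖ := by
  have h1 : (inner ℂ (u ξ) (u ξ) : ℂ) = (inner ℂ ξ ξ : ℂ) := by
    have h2 : (inner ℂ (u ξ) (u ξ) : ℂ) = inner ℂ ξ ((star u * u) ξ) := by
      rw [ContinuousLinearMap.mul_apply, ContinuousLinearMap.star_eq_adjoint,
        ContinuousLinearMap.adjoint_inner_right]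
    rw [h2, h, ContinuousLinearMap.one_apply]
  have h2 : (‖u ξ‖ : ℝ) ^ 2 = ‖ξ‖ ^ 2 := by
    have := congrArg RCLike.re h1
    rwa [inner_self_eq_norm_sq, inner_self_eq_norm_sq] at this
  nlinarith [norm_nonneg (u ξ), norm_nonneg ξ]

lemma unitary_opNorm_le {u : E →L[ℂ] E} (h : star u * u = 1) : ‖u‖ ≤ 1 := by
  refine ContinuousLinearMap.opNorm_le_bound u zero_le_one fun ξ => ?_
  rw [unitary_apply_norm h ξ, one_mul]

private lemma enn_le_aux {a b : ℝ≥0∞} (h : ∀ η : ℝ≥0, η < 1 → (η : ℝ≥0∞) * a ≤ b) :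
    a ≤ b := by
  refine ENNReal.le_of_forall_nnreal_lt fun r hr => ?_
  rcases eq_or_ne a ⊤ with ha | ha
  · have hhalf : (2⁻¹ : ℝ≥0) < 1 := by
      rw [← NNReal.coe_lt_coe]; norm_num
    have hne : ((2⁻¹ : ℝ≥0) : ℝ≥0∞) ≠ 0 := by
      rw [ENNReal.coe_ne_zero]
      positivity
    have h2 := h 2⁻¹ hhalf
    rw [ha, ENNReal.mul_top hne] at h2
    exact le_top.trans h2
  · have ha0 : a ≠ 0 := by
      rintro rfl; simp at hr
    have haNN : a = (a.toNNReal : ℝ≥0∞) := (ENNReal.coe_toNNReal ha).symm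
    have hrA : r < a.toNNReal := by
      rw [haNN] at hr; exact_mod_cast hr
    have haNN0 : a.toNNReal ≠ 0 := by
      simpa [ENNReal.toNNReal_eq_zero_iff, ha] using ha0
    have hη : r / a.toNNReal < 1 :=
      (div_lt_one (pos_iff_ne_zero.mpr haNN0)).mpr hrA
    calc (r : ℝ≥0∞) = ((r / a.toNNReal * a.toNNReal : ℝ≥0) : ℝ≥0∞) := by
          rw [div_mul_cancel₀ r haNN0]
      _ = ((r / a.toNNReal : ℝ≥0) : ℝ≥0∞) * ((a.toNNReal : ℝ≥0) : ℝ≥0∞) := by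
          rw [ENNReal.coe_mul]
      _ = ((r / a.toNNReal : ℝ≥0) : ℝ≥0∞) * a := by rw [← haNN]
      _ ≤ b := h _ hη

end StmtSevenAux

section StmtSevenTau

variable {E : Type} [NormedAddCommGroup E] [InnerProductSpace ℂ E] [CompleteSpace E]
variable {M : VonNeumannAlgebra E} {τ : (E →L[ℂ] E) → ℝ≥0∞}

lemma tau_add (hτ : IsFNSTracialWeight M τ) {x y : E →L[ℂ] E}
    (hx : x ∈ M) (hx0 : 0 ≤ x) (hy : y ∈ M) (hy0 : 0 ≤ y) : τ (x + y) = τ x + τ y :=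
  hτ.1 x y hx ((ContinuousLinearMap.nonneg_iff_isPositive x).mp hx0) hy
    ((ContinuousLinearMap.nonneg_iff_isPositive y).mp hy0)

lemma tau_mono (hτ : IsFNSTracialWeight M τ) {x y : E →L[ℂ] E}
    (hx : x ∈ M) (hy : y ∈ M) (hx0 : 0 ≤ x) (hxy : x ≤ y) : τ x ≤ τ y := by
  have h1 : y = x + (y - x) := by abel
  rw [h1, tau_add hτ hx hx0 (sub_mem hy hx) (sub_nonneg.mpr hxy)]
  exact le_self_add

lemma tau_smul (hτ : IsFNSTracialWeight M τ) {x : E →L[ℂ] E}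
    (hx : x ∈ M) (hx0 : 0 ≤ x) (r : ℝ≥0) : τ ((r : ℝ) • x) = r * τ x := by
  have h := hτ.2.1 r x hx ((ContinuousLinearMap.nonneg_iff_isPositive x).mp hx0)
  rwa [show (((r : ℝ) : ℂ)) • x = (r : ℝ) • x by
    rw [← algebraMap_smul ℂ (r : ℝ) x]; norm_num] at h

lemma exists_sqrt_vN (M : VonNeumannAlgebra E) {W : E →L[ℂ] E} (hW : W ∈ M) (hW0 : 0 ≤ W) :
    ∃ w : E →L[ℂ] E, w ∈ M ∧ IsSelfAdjoint w ∧ 0 ≤ w ∧ w * w = W := by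
  have hsa : IsSelfAdjoint W := isSelfAdjoint_of_nonneg hW0
  refine ⟨cfc Real.sqrt W, cfc_mem_vN M hW hsa Real.continuous_sqrt, cfc_predicate _ _,
    cfc_nonneg fun t _ => Real.sqrt_nonneg t, ?_⟩
  rw [← cfc_mul Real.sqrt Real.sqrt W Real.continuous_sqrt.continuousOn
    Real.continuous_sqrt.continuousOn]
  have h1 : ∀ t ∈ spectrum ℝ W, Real.sqrt t * Real.sqrt t = t := fun t ht =>
    Real.mul_self_sqrt (spectrum_nonneg_of_nonneg hW0 ht)
  rw [cfc_congr h1]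
  exact cfc_id' ℝ W hsa

lemma tau_conj_le (hτ : IsFNSTracialWeight M τ) {c W : E →L[ℂ] E}
    (hc : c ∈ M) (hcsa : IsSelfAdjoint c) (hc1 : c * c ≤ 1)
    (hW : W ∈ M) (hW0 : 0 ≤ W) : τ (c * W * c) ≤ τ W := by
  obtain ⟨w, hwM, hwsa, hw0, hww⟩ := exists_sqrt_vN M hW hW0
  have e1 : star (w * c) * (w * c) = c * W * c := by
    rw [star_mul, hwsa.star_eq, hcsa.star_eq, ← hww]
    simp only [mul_assoc]
  have e2 : (w * c) * star (w * c) = w * (c * c) * w := by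
    rw [star_mul, hwsa.star_eq, hcsa.star_eq]
    simp only [mul_assoc]
  have h3 := hτ.2.2.1 (w * c) (mul_mem hwM hc)
  have h4 : w * (c * c) * w ≤ W := by
    have h5 := star_left_conjugate_le_conjugate hc1 w
    rwa [hwsa.star_eq, mul_one, hww] at h5
  have h6 : 0 ≤ w * (c * c) * w := by
    have h7 : (0 : E →L[ℂ] E) ≤ c * c := by
      have := star_mul_self_nonneg c
      rwa [hcsa.star_eq] at this
    have := star_left_conjugate_nonneg h7 w
    rwa [hwsa.star_eq] at this
  calc τ (c * W * c) = τ ((w * c) * star (w * c)) := by rw [← e1, h3]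
    _ = τ (w * (c * c) * w) := by rw [e2]
    _ ≤ τ W := tau_mono hτ (mul_mem (mul_mem hwM (mul_mem hc hc)) hwM) hW h6 h4

lemma tau_conj_unitary (hτ : IsFNSTracialWeight M τ) {u Y : E →L[ℂ] E}
    (hu : IsUnitaryIn M u) (hY : Y ∈ M) (hY0 : 0 ≤ Y) :
    τ (star u * Y * u) = τ Y := by
  obtain ⟨w, hwM, hwsa, hw0, hww⟩ := exists_sqrt_vN M hY hY0
  have h3 := hτ.2.2.1 (w * u) (mul_mem hwM hu.1)
  have e1 : star (w * u) * (w * u) = star u * Y * u := by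
    rw [star_mul, hwsa.star_eq, ← hww]
    simp only [mul_assoc]
  have e2 : (w * u) * star (w * u) = Y := by
    rw [star_mul, hwsa.star_eq]
    have h5 : w * u * (star u * w) = w * (u * star u) * w := by simp only [mul_assoc]
    rw [h5, hu.2.2, mul_one, hww]
  rw [← e1, h3, e2]

end StmtSevenTau


section StmtSevenMain

open Filter

variable {E : Type} [NormedAddCommGroup E] [InnerProductSpace ℂ E] [CompleteSpace E]
variable {M : VonNeumannAlgebra E} {τ : (E →L[ℂ] E) → ℝ≥0∞}

/-- The cutoff function `t ↦ max (t - δ) 0`. -/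
private def cutf (δ t : ℝ) : ℝ := max (t - δ) 0

/-- `t ↦ sqrt (cutf δ t / max t δ)`, so that `cutg δ t ^ 2 * t = cutf δ t` on `[0, ∞)`. -/
private noncomputable def cutg (δ t : ℝ) : ℝ := Real.sqrt (max (t - δ) 0 / max t δ)

private lemma cutf_continuous (δ : ℝ) : Continuous (cutf δ) :=
  (continuous_id.sub continuous_const).max continuous_const

private lemma cutf_nonneg (δ t : ℝ) : 0 ≤ cutf δ t := le_max_right _ _

private lemma maxδ_pos {δ : ℝ} (hδ : 0 < δ) (t : ℝ) : 0 < max t δ :=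
  lt_of_lt_of_le hδ (le_max_right t δ)

private lemma cutq_continuous {δ : ℝ} (hδ : 0 < δ) :
    Continuous (fun t => max (t - δ) 0 / max t δ) :=
  (cutf_continuous δ).div (continuous_id.max continuous_const)
    fun t => (maxδ_pos hδ t).ne'

private lemma cutg_continuous {δ : ℝ} (hδ : 0 < δ) : Continuous (cutg δ) :=
  Real.continuous_sqrt.comp (cutq_continuous hδ)

private lemma cutg_sq {δ : ℝ} (hδ : 0 < δ) (t : ℝ) :
    cutg δ t * cutg δ t = max (t - δ) 0 / max t δ :=
  Real.mul_self_sqrt (div_nonneg (le_max_right _ _) (maxδ_pos hδ t).le)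

/-- Key quantitative step: `τ (cfc (cutf δ) X) ≤ τ Y` whenever `X` is a norm limit of
unitary conjugates of `Y` in `M`. -/
private lemma tau_cut_le (hτ : IsFNSTracialWeight M τ) {X Y : E →L[ℂ] E}
    (hXM : X ∈ M) (hYM : Y ∈ M) (hX0 : 0 ≤ X) (hY0 : 0 ≤ Y)
    (u : ℕ → E →L[ℂ] E) (hu : ∀ k, IsUnitaryIn M (u k))
    (hconv : Filter.Tendsto (fun k => ‖X - star (u k) * Y * u k‖) Filter.atTop (nhds 0))
    {δ : ℝ} (hδ : 0 < δ) : τ (cfc (cutf δ) X) ≤ τ Y := by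
  have hXsa : IsSelfAdjoint X := isSelfAdjoint_of_nonneg hX0
  have hσ : ∀ t ∈ spectrum ℝ X, 0 ≤ t := fun t ht => spectrum_nonneg_of_nonneg hX0 ht
  set F : E →L[ℂ] E := cfc (cutf δ) X with hF
  have hFM : F ∈ M := cfc_mem_vN M hXM hXsa (cutf_continuous δ)
  have hF0 : 0 ≤ F := cfc_nonneg fun t _ => cutf_nonneg δ t
  refine enn_le_aux fun η hη => ?_
  have hη1 : (η : ℝ) < 1 := by exact_mod_cast hη
  have hδη : (0:ℝ) < δ * (1 - η) := by nlinarith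
  obtain ⟨k, hk⟩ := (hconv.eventually (gt_mem_nhds hδη)).exists
  set t0 : E →L[ℂ] E := star (u k) * Y * u k with ht0def
  set ε : ℝ := ‖X - t0‖ with hεdef
  have hε0 : 0 ≤ ε := norm_nonneg _
  have hεlt : ε < δ * (1 - η) := hk
  have htM : t0 ∈ M := mul_mem (mul_mem (star_mem (hu k).1) hYM) (hu k).1
  have ht0pos : 0 ≤ t0 := star_left_conjugate_nonneg hY0 (u k)
  have htsa : IsSelfAdjoint t0 := isSelfAdjoint_of_nonneg ht0pos
  have hXt : X ≤ t0 + ε • (1 : E →L[ℂ] E) := by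
    have h1 : X - t0 ≤ algebraMap ℝ (E →L[ℂ] E) ‖X - t0‖ :=
      IsSelfAdjoint.le_algebraMap_norm_self (hXsa.sub htsa)
    rw [Algebra.algebraMap_eq_smul_one] at h1
    have h2 := sub_le_iff_le_add.mp h1
    rwa [add_comm] at h2
  set c : E →L[ℂ] E := cfc (cutg δ) X with hc
  have hcM : c ∈ M := cfc_mem_vN M hXM hXsa (cutg_continuous hδ)
  have hcsa : IsSelfAdjoint c := cfc_predicate _ _
  have hcc : c * c = cfc (fun s => max (s - δ) 0 / max s δ) X := by
    rw [hc, ← cfc_mul (cutg δ) (cutg δ) X (cutg_continuous hδ).continuousOn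
      (cutg_continuous hδ).continuousOn]
    exact cfc_congr fun s _ => cutg_sq hδ s
  have hcc1 : c * c ≤ 1 := by
    have e0 : (1 : E →L[ℂ] E) = cfc (fun _ : ℝ => (1:ℝ)) X := by
      rw [cfc_const (1:ℝ) X hXsa, map_one]
    rw [hcc, e0]
    refine cfc_mono (fun s hs => ?_) (hf := (cutq_continuous hδ).continuousOn)
      (hg := continuousOn_const)
    refine div_le_one_of_le₀ ?_ (maxδ_pos hδ s).le
    exact max_le ((sub_le_self s hδ.le).trans (le_max_left s δ)) (maxδ_pos hδ s).le
  have hcXc : c * X * c = cfc (fun s => cutg δ s * s * cutg δ s) X := by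
    have e1 : c * X = cfc (fun s => cutg δ s * s) X := by
      rw [cfc_mul (cutg δ) (fun s : ℝ => s) X (cutg_continuous hδ).continuousOn
        continuousOn_id, cfc_id' ℝ X hXsa, hc]
    rw [cfc_mul (fun s => cutg δ s * s) (cutg δ) X
      ((cutg_continuous hδ).mul continuous_id).continuousOn
      (cutg_continuous hδ).continuousOn, ← e1]
  set r : ℝ := 1 - ε / δ with hrdef
  have hηr : (η : ℝ) ≤ r := by
    have h2 : ε / δ < 1 - η := by rw [div_lt_iff₀ hδ]; nlinarith
    rw [hrdef]; linarith
  have hr0 : 0 ≤ r := le_trans η.2 hηr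
  have hkey : cfc (fun s => r * cutf δ s) X + ε • (c * c) ≤ c * X * c := by
    have hsm : ε • (c * c) = cfc (fun s => ε * (max (s - δ) 0 / max s δ)) X := by
      rw [hcc, ← cfc_const_mul ε (fun s => max (s - δ) 0 / max s δ) X
        (cutq_continuous hδ).continuousOn]
    rw [hsm, hcXc, ← cfc_add (a := X) (f := fun s => r * cutf δ s)
      (g := fun s => ε * (max (s - δ) 0 / max s δ))
      (hf := (continuous_const.mul (cutf_continuous δ)).continuousOn)
      (hg := (continuous_const.mul (cutq_continuous hδ)).continuousOn)]
    refine cfc_mono (fun s hs => ?_)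
      (hf := ((continuous_const.mul (cutf_continuous δ)).add
        (continuous_const.mul (cutq_continuous hδ))).continuousOn)
      (hg := (((cutg_continuous hδ).mul continuous_id).mul (cutg_continuous hδ)).continuousOn)
    have hs0 := hσ s hs
    have hrhs : cutg δ s * s * cutg δ s = (max (s - δ) 0 / max s δ) * s := by
      rw [show cutg δ s * s * cutg δ s = (cutg δ s * cutg δ s) * s by ring, cutg_sq hδ]
    rw [hrhs]
    rcases le_or_gt s δ with hsd | hsd
    · have hmax0 : max (s - δ) 0 = 0 := max_eq_right (by linarith)
      simp [cutf, hmax0]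
    · have hmax1 : max (s - δ) 0 = s - δ := max_eq_left (by linarith)
      have hmax2 : max s δ = s := max_eq_left hsd.le
      have hspos : 0 < s := lt_trans hδ hsd
      simp only [cutf]
      rw [hmax1, hmax2, div_mul_cancel₀ _ hspos.ne']
      have h7 : (s - δ) / s ≤ (s - δ) / δ :=
        div_le_div_of_nonneg_left (by linarith) hδ hsd.le
      have h8 : r * (s - δ) + ε * ((s - δ) / δ) = s - δ := by
        rw [hrdef]; field_simp; ring
      have h9 : ε * ((s - δ) / s) ≤ ε * ((s - δ) / δ) :=
        mul_le_mul_of_nonneg_left h7 hε0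
      linarith
  have hconj : c * X * c ≤ c * t0 * c + ε • (c * c) := by
    have h2 := star_left_conjugate_le_conjugate hXt c
    rw [hcsa.star_eq] at h2
    refine h2.trans_eq ?_
    rw [mul_add, add_mul, mul_smul_comm, smul_mul_assoc, mul_one]
  have hop : cfc (fun s => r * cutf δ s) X ≤ c * t0 * c :=
    le_of_add_le_add_right (hkey.trans hconj)
  have hrF : cfc (fun s => r * cutf δ s) X = r • F := by
    rw [hF, cfc_const_mul r (cutf δ) X (cutf_continuous δ).continuousOn]
  have hctcM : c * t0 * c ∈ M := mul_mem (mul_mem hcM htM) hcM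
  have hctc0 : 0 ≤ c * t0 * c := by
    have h3 := star_left_conjugate_nonneg ht0pos c
    rwa [hcsa.star_eq] at h3
  have hrF0 : 0 ≤ r • F := by
    rw [← hrF]
    exact cfc_nonneg fun s _ => mul_nonneg hr0 (cutf_nonneg δ s)
  have hτ1 : τ (r • F) ≤ τ (c * t0 * c) := by
    refine tau_mono hτ (smul_mem_vN hFM r) hctcM hrF0 ?_
    rw [← hrF]; exact hop
  have hτ2 : τ (c * t0 * c) ≤ τ t0 := tau_conj_le hτ hcM hcsa hcc1 htM ht0pos
  have hτ3 : τ t0 = τ Y := tau_conj_unitary hτ (hu k) hYM hY0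
  set rn : ℝ≥0 := r.toNNReal with hrn0
  have hrn : (rn : ℝ) = r := Real.coe_toNNReal r hr0
  have hτrF : τ (r • F) = rn * τ F := by
    have h10 := tau_smul hτ hFM hF0 rn
    rwa [hrn] at h10
  calc (η : ℝ≥0∞) * τ F ≤ (rn : ℝ≥0∞) * τ F := by
        gcongr
        rw [← NNReal.coe_le_coe, hrn]
        exact hηr
    _ = τ (r • F) := hτrF.symm
    _ ≤ τ t0 := hτ1.trans hτ2
    _ = τ Y := hτ3

/-- Normality: `τ X` is the supremum of the traces of the cutoffs of `X`. -/
private lemma tau_eq_iSup_cut (hτ : IsFNSTracialWeight M τ) {X : E →L[ℂ] E}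
    (hXM : X ∈ M) (hX0 : 0 ≤ X) :
    τ X = ⨆ n : ℕ, τ (cfc (cutf (1/(n+1))) X) := by
  have hXsa : IsSelfAdjoint X := isSelfAdjoint_of_nonneg hX0
  have hσ : ∀ t ∈ spectrum ℝ X, 0 ≤ t := fun t ht => spectrum_nonneg_of_nonneg hX0 ht
  set s : ℕ → E →L[ℂ] E := fun n => cfc (cutf (1/(n+1 : ℝ))) X with hs
  have hδpos : ∀ n : ℕ, (0:ℝ) < 1/(n+1) := fun n => by positivity
  have hmem : ∀ n, s n ∈ M := fun n => cfc_mem_vN M hXM hXsa (cutf_continuous _)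
  have hpos : ∀ n, 0 ≤ s n := fun n => cfc_nonneg fun t _ => cutf_nonneg _ t
  have hmono : ∀ i j : ℕ, i ≤ j → s i ≤ s j := by
    intro i j hij
    refine cfc_mono (fun t ht => ?_) (hf := (cutf_continuous _).continuousOn)
      (hg := (cutf_continuous _).continuousOn)
    have h1 : (1:ℝ)/(j+1) ≤ 1/(i+1) := by
      apply one_div_le_one_div_of_le (by positivity)
      have : (i:ℝ) ≤ j := by exact_mod_cast hij
      linarith
    exact max_le_max (sub_le_sub_left h1 t) le_rfl
  have hub : ∀ n, s n ≤ X := by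
    intro n
    have h1 : cfc (cutf (1/(n+1 : ℝ))) X ≤ cfc (id : ℝ → ℝ) X := by
      refine cfc_mono (fun t ht => ?_) (hf := (cutf_continuous _).continuousOn)
        (hg := continuousOn_id)
      exact max_le (sub_le_self t (hδpos n).le) (hσ t ht)
    rwa [cfc_id ℝ X hXsa] at h1
  have hnorm : ∀ n : ℕ, ‖X - s n‖ ≤ 1/(n+1 : ℝ) := by
    intro n
    have h1 : X - s n = cfc (fun t => t - cutf (1/(n+1 : ℝ)) t) X := by
      have h2 : cfc (fun t : ℝ => t - cutf (1/(n+1 : ℝ)) t) X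
          = cfc (fun t : ℝ => t) X - cfc (cutf (1/(n+1 : ℝ))) X := by
        exact cfc_sub _ _ _ continuousOn_id (cutf_continuous _).continuousOn
      rw [h2, cfc_id' ℝ X hXsa]
    rw [h1]
    refine norm_cfc_le (hδpos n).le fun t ht => ?_
    have ht0 := hσ t ht
    rw [Real.norm_eq_abs, abs_le]
    simp only [cutf]
    have hp := hδpos n
    constructor
    · have : max (t - 1/(n+1 : ℝ)) 0 ≤ t := max_le (sub_le_self t (hδpos n).le) ht0
      linarith
    · have : t - 1/(n+1 : ℝ) ≤ max (t - 1/(n+1 : ℝ)) 0 := le_max_left _ _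
      linarith
  have hlub : OpIsLUB (Set.range s) X := by
    constructor
    · rintro y ⟨n, rfl⟩
      exact (ContinuousLinearMap.le_def _ _).mp (hub n)
    · intro z hz
      show (z - X).IsPositive
      have hzsa : IsSelfAdjoint (z - X) := by
        have h0 := hz (s 0) ⟨0, rfl⟩
        have he : z - X = (z - s 0) + (s 0 - X) := by abel
        rw [he]
        have hs0sa : IsSelfAdjoint (s 0) :=
          show IsSelfAdjoint (cfc (cutf (1/((0:ℕ)+1 : ℝ))) X) from cfc_predicate _ _
        exact h0.isSelfAdjoint.add (hs0sa.sub hXsa)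
      refine ContinuousLinearMap.isPositive_def'.mpr ⟨hzsa, fun ξ => ?_⟩
      have key : ∀ n : ℕ, -(1/(n+1:ℝ) * ‖ξ‖^2) ≤ (z - X).reApplyInnerSelf ξ := by
        intro n
        have hsplit : (inner ℂ ((z - X) ξ) ξ : ℂ)
            = inner ℂ ((z - s n) ξ) ξ + inner ℂ ((s n - X) ξ) ξ := by
          rw [← inner_add_left]
          congr 1
          simp
        have h1 : 0 ≤ RCLike.re (inner ℂ ((z - s n) ξ) ξ : ℂ) := (hz (s n) ⟨n, rfl⟩).2 ξ
        have h2 := re_inner_ge_neg_norm (s n - X) ξ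
        have h3 : ‖s n - X‖ ≤ 1/(n+1:ℝ) := by rw [norm_sub_rev]; exact hnorm n
        show -(1/(n+1:ℝ) * ‖ξ‖^2) ≤ RCLike.re (inner ℂ ((z - X) ξ) ξ : ℂ)
        rw [hsplit, map_add]
        have h4 : -(1/(n+1:ℝ) * ‖ξ‖^2) ≤ -(‖s n - X‖ * ‖ξ‖^2) := by
          have := sq_nonneg ‖ξ‖
          nlinarith
        linarith
      have hlim : Filter.Tendsto (fun n : ℕ => -(1/(n+1:ℝ) * ‖ξ‖^2))
          Filter.atTop (nhds 0) := by
        simpa using (tendsto_one_div_add_atTop_nhds_zero_nat.mul_const (‖ξ‖^2)).neg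
      exact le_of_tendsto hlim (Filter.Eventually.of_forall key)
  exact hτ.2.2.2.2.1 ℕ inferInstance s X ⟨0⟩
    (fun n => ⟨hmem n, (ContinuousLinearMap.nonneg_iff_isPositive _).mp (hpos n)⟩)
    (fun i j hij => (ContinuousLinearMap.le_def _ _).mp (hmono i j hij)) hXM hlub

/-- If `X` is a norm limit of unitary conjugates of `Y` (both positive, in `M`),
then `τ X ≤ τ Y`. -/
private lemma tau_le_of_uc (hτ : IsFNSTracialWeight M τ) {X Y : E →L[ℂ] E}
    (hXM : X ∈ M) (hYM : Y ∈ M) (hX0 : 0 ≤ X) (hY0 : 0 ≤ Y)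
    (u : ℕ → E →L[ℂ] E) (hu : ∀ k, IsUnitaryIn M (u k))
    (hconv : Filter.Tendsto (fun k => ‖X - star (u k) * Y * u k‖) Filter.atTop (nhds 0)) :
    τ X ≤ τ Y := by
  rw [tau_eq_iSup_cut hτ hXM hX0]
  exact iSup_le fun n => tau_cut_le hτ hXM hYM hX0 hY0 u hu hconv (by positivity)

end StmtSevenMain

/-- let `A ⊆ F(M,τ)` be a ∗-subalgebra spanned by its positive part,
and `ρ : A → M` a ∗-isomorphism approximately unitarily equivalent in `M` to the
identity map of `A`.  Then `τ(ρ a) = τ a` for every positive `a ∈ A`. -/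
theorem stmt_7
    {E : Type} [NormedAddCommGroup E] [InnerProductSpace ℂ E] [CompleteSpace E]
    (M : VonNeumannAlgebra E) (τ : (E →L[ℂ] E) → ℝ≥0∞)
    (hτ : IsFNSTracialWeight M τ)
    (A : Set (E →L[ℂ] E)) (hA : IsStarSubalgebraSet A)
    (hAF : ∀ x ∈ A, IsFiniteRank M τ x)
    (hAspan : ∀ a ∈ A, ∃ (k : ℕ) (c : Fin k → ℂ) (x : Fin k → E →L[ℂ] E),
        (∀ i, x i ∈ A ∧ (x i).IsPositive) ∧ a = ∑ i, c i • x i)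
    (ρ : (E →L[ℂ] E) → (E →L[ℂ] E))
    (hρ : IsStarHomOn A ρ)
    (hρinj : ∀ x ∈ A, ∀ y ∈ A, ρ x = ρ y → x = y)
    (hρmem : ∀ x ∈ A, ρ x ∈ M)
    (hau : ∃ u : ℕ → (E →L[ℂ] E), (∀ k, IsUnitaryIn M (u k)) ∧
        ∀ a ∈ A, Filter.Tendsto (fun k => ‖ρ a - star (u k) * a * u k‖)
          Filter.atTop (nhds 0)) :
    ∀ a ∈ A, ContinuousLinearMap.IsPositive a → τ (ρ a) = τ a := by
  classical
  obtain ⟨u, hu, hconv⟩ := hau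
  intro a haA hapos
  obtain ⟨x, p, y, hxM, hyM, hpM, -, haxy⟩ := hAF a haA
  have haM : a ∈ M := by rw [haxy]; exact mul_mem (mul_mem hxM hpM.1) hyM
  have ha0 : 0 ≤ a := (ContinuousLinearMap.nonneg_iff_isPositive a).mpr hapos
  have hρaM : ρ a ∈ M := hρmem a haA
  have hρasa : IsSelfAdjoint (ρ a) := by
    have h1 := hρ.2.2.2 a haA
    show star (ρ a) = ρ a
    rw [← h1, hapos.isSelfAdjoint.star_eq]
  have hconv_a := hconv a haA
  have hpos_tk : ∀ k, 0 ≤ star (u k) * a * u k := fun k => star_left_conjugate_nonneg ha0 (u k)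
  have hρa0 : 0 ≤ ρ a := nonneg_of_tendsto_norm hρasa hpos_tk hconv_a
  have hle1 : τ (ρ a) ≤ τ a := tau_le_of_uc hτ hρaM haM hρa0 ha0 u hu hconv_a
  have hu' : ∀ k, IsUnitaryIn M (star (u k)) := fun k =>
    ⟨star_mem (hu k).1, by rw [star_star]; exact (hu k).2.2, by rw [star_star]; exact (hu k).2.1⟩
  have hconv' : Filter.Tendsto
      (fun k => ‖a - star (star (u k)) * (ρ a) * (star (u k))‖) Filter.atTop (nhds 0) := by
    have hbound : ∀ k, ‖a - star (star (u k)) * (ρ a) * (star (u k))‖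
        ≤ ‖ρ a - star (u k) * a * u k‖ := by
      intro k
      have h1 : star (u k) * u k = 1 := (hu k).2.1
      have h2 : u k * star (u k) = 1 := (hu k).2.2
      have hu1 : ‖u k‖ ≤ 1 := unitary_opNorm_le h1
      have hu2 : ‖star (u k)‖ ≤ 1 :=
        unitary_opNorm_le (by rw [star_star]; exact h2)
      have hide : a - star (star (u k)) * (ρ a) * (star (u k))
          = u k * (star (u k) * a * u k - ρ a) * star (u k) := by
        rw [star_star, mul_sub, sub_mul]
        congr 1
        simp only [← mul_assoc]
        rw [h2, one_mul, mul_assoc, h2, mul_one]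
      rw [hide]
      calc ‖u k * (star (u k) * a * u k - ρ a) * star (u k)‖
          ≤ ‖u k * (star (u k) * a * u k - ρ a)‖ * ‖star (u k)‖ := norm_mul_le _ _
        _ ≤ (‖u k‖ * ‖star (u k) * a * u k - ρ a‖) * ‖star (u k)‖ :=
            mul_le_mul_of_nonneg_right (norm_mul_le _ _) (norm_nonneg _)
        _ ≤ (1 * ‖star (u k) * a * u k - ρ a‖) * 1 := by gcongr
        _ = ‖ρ a - star (u k) * a * u k‖ := by rw [norm_sub_rev]; ring
    exact squeeze_zero (fun k => norm_nonneg _) hbound hconv_a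
  have hle2 : τ a ≤ τ (ρ a) :=
    tau_le_of_uc hτ haM hρaM ha0 hρa0 (fun k => star (u k)) hu' hconv'
  exact le_antisymm hle1 hle2


end ShenShi
end
end
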